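/- arXiv:1901.05504 — 2 statements merged into one kernel-verified Lean document; each statement's English description precedes it below -/
import Mathlib

section
/- Suppose F : (0,∞) → (0,∞) is differentiable with F' monotone decreasing, β, c > 0 are constants, and F'((βcs + 1)/(β²cx)) = F'((βcs + x)/(β²c)) holds for all x, s > 0. Then F' is constant on (0,∞), so F(t) = d·t + e for some constants d, e. -/
theorem stmt_12 (F F' : ℝ → ℝ) (β c : ℝ) (hβ : 0 < β) (hc : 0 < c)
    (hderiv : ∀ t > 0, HasDerivAt F (F' t) t)
    (hanti : AntitoneOn F' (Set.Ioi 0))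
    (heq : ∀ x > 0, ∀ s > 0,
      F' ((β * c * s + 1) / (β ^ 2 * c * x)) = F' ((β * c * s + x) / (β ^ 2 * c))) :
    (∀ t > 0, ∀ s > 0, F' t = F' s) ∧
    ∃ d e : ℝ, ∀ t > 0, F t = d * t + e := by
  have key : ∀ t > 0, ∀ u > 0, F' t = F' u := by
    intro t ht u hu
    set K : ℝ := (β * c * 1 + 1) / (β ^ 2 * c) with hKdef
    have hK : 0 < K := by positivity
    have hm : 0 < min t u := lt_min ht hu
    set x : ℝ := max (K / min t u) (β ^ 2 * c * max t u) with hxdef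
    have hx : 0 < x := lt_max_of_lt_left (by positivity)
    set A : ℝ := (β * c * 1 + 1) / (β ^ 2 * c * x) with hAdef
    set B : ℝ := (β * c * 1 + x) / (β ^ 2 * c) with hBdef
    have hA : 0 < A := by positivity
    have hB : 0 < B := by positivity
    have hAK : A = K / x := by rw [hAdef, hKdef, div_div]
    have hAle : A ≤ min t u := by
      rw [hAK]
      rw [div_le_iff₀ hx]
      calc K = (K / min t u) * min t u := by field_simp
        _ ≤ x * min t u := by
            apply mul_le_mul_of_nonneg_right (le_max_left _ _) hm.le
        _ = min t u * x := mul_comm _ _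
    have hBle : max t u ≤ B := by
      rw [hBdef, le_div_iff₀ (by positivity)]
      calc max t u * (β ^ 2 * c) = β ^ 2 * c * max t u := mul_comm _ _
        _ ≤ x := le_max_right _ _
        _ ≤ β * c * 1 + x := by nlinarith
    have hAB : F' A = F' B := heq x hx 1 one_pos
    have const_on : ∀ v > 0, A ≤ v → v ≤ B → F' v = F' A := by
      intro v hv hAv hvB
      have h1 : F' v ≤ F' A := hanti hA hv hAv
      have h2 : F' B ≤ F' v := hanti hv hB hvB
      rw [hAB] at h1 ⊢
      linarith
    rw [const_on t ht (hAle.trans (min_le_left _ _)) ((le_max_left t u).trans hBle),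
        const_on u hu (hAle.trans (min_le_right _ _)) ((le_max_right t u).trans hBle)]
  refine ⟨key, ?_⟩
  set d : ℝ := F' 1 with hd
  refine ⟨d, F 1 - d * 1, ?_⟩
  set G : ℝ → ℝ := fun t => F t - d * t with hG
  have hGderiv : ∀ t ∈ Set.Ioi (0:ℝ), HasDerivAt G 0 t := by
    intro t ht
    have h := (hderiv t ht).sub ((hasDerivAt_id t).const_mul d)
    have h2 : F' t - d * 1 = 0 := by rw [key t ht 1 one_pos, hd]; ring
    rw [h2] at h
    exact h
  have hconv : Convex ℝ (Set.Ioi (0:ℝ)) := convex_Ioi 0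
  have hdiff : DifferentiableOn ℝ G (Set.Ioi (0:ℝ)) := fun t ht =>
    (hGderiv t ht).differentiableAt.differentiableWithinAt
  have hfd : ∀ t ∈ Set.Ioi (0:ℝ), fderivWithin ℝ G (Set.Ioi (0:ℝ)) t = 0 := by
    intro t ht
    rw [fderivWithin_of_isOpen isOpen_Ioi ht]
    have := (hGderiv t ht).hasFDerivAt.fderiv
    rw [this]; ext; simp
  intro t ht
  have := hconv.is_const_of_fderivWithin_eq_zero hdiff hfd ht (Set.mem_Ioi.mpr one_pos)
  have h1 : F t - d * t = F 1 - d * 1 := this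
  linarith
end

section
/- Let f : (0,∞) → (0,∞) satisfy t·f(1/t) = f(t) for all t > 0 and suppose that s·F(t/h(s)) = t·F(s/h(t)) for all t, s > 0, where F(t) = 1/f(1/t) and h : (0,∞) → (0,∞). Then h(t)·f(s/h(t)) = t·f(h(s)/t) for all t, s > 0 implies s·f(h(t)/s) = t·f(h(s)/t) for all t, s > 0. -/
theorem stmt_13 (f F h : ℝ → ℝ)
    (hfpos : ∀ t > 0, 0 < f t)
    (hhpos : ∀ t > 0, 0 < h t)
    (hsym : ∀ t > 0, t * f (1 / t) = f t)
    (hF : ∀ t > 0, F t = 1 / f (1 / t))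
    (hFeq : ∀ t > 0, ∀ s > 0, s * F (t / h s) = t * F (s / h t)) :
    (∀ t > 0, ∀ s > 0, h t * f (s / h t) = t * f (h s / t)) →
    (∀ t > 0, ∀ s > 0, s * f (h t / s) = t * f (h s / t)) := by
  intro H t ht s hs
  -- F x = x / f x for x > 0
  have hFform : ∀ x > 0, F x = x / f x := by
    intro x hx
    have h1 : f (1 / x) = f x / x := by
      field_simp
      linarith [hsym x hx]
    rw [hF x hx, h1]
    rw [one_div_div]
  have hht := hhpos t ht
  have hhs := hhpos s hs
  have hxt : (0:ℝ) < t / h s := div_pos ht hhs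
  have hxs : (0:ℝ) < s / h t := div_pos hs hht
  have hf1 := hfpos _ hxt
  have hf2 := hfpos _ hxs
  have key : h s * f (t / h s) = h t * f (s / h t) := by
    have e := hFeq t ht s hs
    rw [hFform _ hxt, hFform _ hxs] at e
    field_simp at e
    have hst : 0 < s * t := mul_pos hs ht
    have := mul_left_cancel₀ (ne_of_gt hst) (by rw [e] : s * t * (h t * f (s / h t)) = s * t * (h s * f (t / h s)))
    linarith
  have H1 := H s hs t ht  -- h s * f (t / h s) = s * f (h t / s)
  have H2 := H t ht s hs  -- h t * f (s / h t) = t * f (h s / t)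
  linarith
end
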